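/- Let X be a Banach space and let P, Q : X → X be two bounded linear projectors (P∘P = P, Q∘Q = Q) with ‖P − Q‖ < δ for some δ with 0 < δ < √2 − 1. Then for every x in the range of Q, ‖x − Q(P x)‖ ≤ δ(2 + δ)‖x‖; in particular, since δ(2+δ) < 1, the map x ↦ Q(P x) is invertible on the range of Q. -/
import Mathlib


/-- Nearby projectors: `x ↦ Q (P x)` is close to the identity on the range of `Q`,
and hence invertible on the range of `Q`. -/
theorem stmt0 {X : Type*} [NormedAddCommGroup X] [NormedSpace ℝ X] [CompleteSpace X]
    (P Q : X →L[ℝ] X) (hP : P.comp P = P) (hQ : Q.comp Q = Q)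
    (δ : ℝ) (hδ0 : 0 < δ) (hδ1 : δ < Real.sqrt 2 - 1) (hPQ : ‖P - Q‖ < δ) :
    (∀ x ∈ Set.range Q, ‖x - Q (P x)‖ ≤ δ * (2 + δ) * ‖x‖) ∧
    (∀ y ∈ Set.range Q, ∃! x, x ∈ Set.range Q ∧ Q (P x) = y) := by
  have hQQ : ∀ x, Q (Q x) = Q x := fun x => by
    have := DFunLike.congr_fun hQ x
    simpa using this
  have hmem : ∀ x, x ∈ Set.range Q ↔ Q x = x := by
    intro x
    constructor
    · rintro ⟨y, rfl⟩; exact hQQ y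
    · intro h; exact ⟨x, h⟩
  have hQP' : ‖Q - P‖ < δ := by rwa [norm_sub_rev] at hPQ
  -- key estimate
  have key : ∀ x : X, Q x = x → ‖x - Q (P x)‖ ≤ δ * (2 + δ) * ‖x‖ := by
    intro x hx
    have h1 : ‖x - P x‖ ≤ δ * ‖x‖ := by
      have : x - P x = (Q - P) x := by
        rw [ContinuousLinearMap.sub_apply, hx]
      rw [this]
      calc ‖(Q - P) x‖ ≤ ‖Q - P‖ * ‖x‖ := (Q - P).le_opNorm x
        _ ≤ δ * ‖x‖ := by
          apply mul_le_mul_of_nonneg_right hQP'.le (norm_nonneg x)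
    have hPx : ‖P x‖ ≤ (1 + δ) * ‖x‖ := by
      have : ‖P x‖ ≤ ‖x‖ + ‖x - P x‖ := by
        calc ‖P x‖ = ‖x - (x - P x)‖ := by congr 1; abel
          _ ≤ ‖x‖ + ‖x - P x‖ := norm_sub_le _ _
      nlinarith [norm_nonneg x]
    have hPP : P (P x) = P x := by
      have := DFunLike.congr_fun hP x
      simpa using this
    have h2 : ‖P x - Q (P x)‖ ≤ δ * ‖P x‖ := by
      have : P x - Q (P x) = (P - Q) (P x) := by
        rw [ContinuousLinearMap.sub_apply, hPP]
      rw [this]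
      calc ‖(P - Q) (P x)‖ ≤ ‖P - Q‖ * ‖P x‖ := (P - Q).le_opNorm (P x)
        _ ≤ δ * ‖P x‖ := mul_le_mul_of_nonneg_right hPQ.le (norm_nonneg _)
    have : x - Q (P x) = (x - P x) + (P x - Q (P x)) := by abel
    rw [this]
    calc ‖(x - P x) + (P x - Q (P x))‖ ≤ ‖x - P x‖ + ‖P x - Q (P x)‖ := norm_add_le _ _
      _ ≤ δ * ‖x‖ + δ * ((1 + δ) * ‖x‖) := by
          have := h2.trans (mul_le_mul_of_nonneg_left hPx hδ0.le)
          linarith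
      _ = δ * (2 + δ) * ‖x‖ := by ring
  have hk1 : δ * (2 + δ) < 1 := by
    have hs : Real.sqrt 2 ^ 2 = 2 := Real.sq_sqrt (by norm_num)
    nlinarith [Real.sqrt_nonneg 2]
  refine ⟨fun x hx => key x ((hmem x).1 hx), ?_⟩
  intro y hy
  have hQy : Q y = y := (hmem y).1 hy
  -- uniqueness core
  have uniq : ∀ x₁ x₂ : X, Q x₁ = x₁ → Q x₂ = x₂ → Q (P x₁) = Q (P x₂) → x₁ = x₂ := by
    intro x₁ x₂ h₁ h₂ he
    set d := x₁ - x₂ with hd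
    have hQd : Q d = d := by simp [hd, map_sub, h₁, h₂]
    have hQPd : Q (P d) = 0 := by simp [hd, map_sub, he]
    have := key d hQd
    rw [hQPd, sub_zero] at this
    have hd0 : ‖d‖ = 0 := by nlinarith [norm_nonneg d]
    have : d = 0 := norm_eq_zero.mp hd0
    exact sub_eq_zero.mp this
  -- existence via contraction on the closed set s
  have hclosed : IsClosed {x : X | Q x = x} :=
    isClosed_eq Q.continuous continuous_id
  set s : Set X := {x : X | Q x = x} with hs
  haveI : CompleteSpace s := hclosed.completeSpace_coe
  haveI : Nonempty s := ⟨⟨0, by simp [hs]⟩⟩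
  set k : NNReal := ⟨δ * (2 + δ), by positivity⟩ with hkdef
  have hmemg : ∀ z : s, Q (y + z.1 - Q (P z.1)) = y + z.1 - Q (P z.1) := by
    intro z
    have hz : Q z.1 = z.1 := z.2
    simp [map_add, map_sub, hQy, hz, hQQ]
  set g : s → s := fun z => ⟨y + z.1 - Q (P z.1), hmemg z⟩ with hg
  have hcontr : ContractingWith k g := by
    constructor
    · exact_mod_cast hk1
    · apply LipschitzWith.of_dist_le_mul
      intro z₁ z₂
      have hd : (g z₁).1 - (g z₂).1 = (z₁.1 - z₂.1) - Q (P (z₁.1 - z₂.1)) := by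
        simp only [hg, map_sub]
        abel
      have hz₁ : Q z₁.1 = z₁.1 := z₁.2
      have hz₂ : Q z₂.1 = z₂.1 := z₂.2
      have hQd : Q (z₁.1 - z₂.1) = z₁.1 - z₂.1 := by
        simp [map_sub, hz₁, hz₂]
      have := key (z₁.1 - z₂.1) hQd
      calc dist (g z₁) (g z₂) = ‖(g z₁).1 - (g z₂).1‖ := by
            rw [Subtype.dist_eq, dist_eq_norm]
        _ = ‖(z₁.1 - z₂.1) - Q (P (z₁.1 - z₂.1))‖ := by rw [hd]
        _ ≤ δ * (2 + δ) * ‖z₁.1 - z₂.1‖ := this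
        _ = (k : ℝ) * dist z₁ z₂ := by
            rw [Subtype.dist_eq, dist_eq_norm]; rfl
  set x : s := ContractingWith.fixedPoint g hcontr with hx
  have hfix : g x = x := hcontr.fixedPoint_isFixedPt
  have hxval : y + x.1 - Q (P x.1) = x.1 := congrArg Subtype.val hfix
  have hQPx : Q (P x.1) = y := by
    have h1 : y + x.1 - Q (P x.1) - x.1 = 0 := by rw [hxval]; abel
    have h2 : y - Q (P x.1) = 0 := by rw [← h1]; abel
    exact (sub_eq_zero.mp h2).symm
  refine ⟨x.1, ⟨(hmem x.1).2 x.2, hQPx⟩, ?_⟩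
  rintro x' ⟨hx'mem, hx'fix⟩
  exact uniq x' x.1 ((hmem x').1 hx'mem) x.2 (by rw [hx'fix, hQPx])
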